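/- arXiv:2601.14411 — 2 statements merged into one kernel-verified Lean document; each statement's English description precedes it below -/
import Mathlib

section
/- There is a constant C₀ > 0 such that the following holds (Frostman is inherited upwards). Let K ⊆ ℝ^n be a bounded convex set with |K| > 0, let 𝕎 be a finite family of convex subsets of K, and for each W ∈ 𝕎 let 𝕍_W be a nonempty finite family of bounded convex sets with V ⊆ W for every V ∈ 𝕍_W; set 𝕍 = ⊔_{W∈𝕎} 𝕍_W (disjoint union). Suppose C_F(𝕍,K) ≤ C, and suppose there is D > 0 with D ≤ Δ(𝕍_W, W) ≤ 2D for every W ∈ 𝕎. Then C_F(𝕎,K) ≤ C₀ · C. -/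
open MeasureTheory Metric Bornology
open scoped Classical ENNReal RealInnerProductSpace

noncomputable section

/-- Euclidean space `ℝⁿ`. -/
abbrev Space (n : ℕ) : Type := EuclideanSpace ℝ (Fin n)

/-- Lebesgue volume, as a real number. -/
def vol {n : ℕ} (A : Set (Space n)) : ℝ := (MeasureTheory.volume A).toReal

/-- A `δ`-tube in `ℝⁿ`: the closed `δ`-neighborhood of a line segment of length 1. -/
def IsTube (n : ℕ) (δ : ℝ) (T : Set (Space n)) : Prop :=
  ∃ x y : Space n, dist x y = 1 ∧ T = Metric.cthickening δ (segment ℝ x y)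

/-- The common volume of a `δ`-tube in `ℝ³`. -/
def tubeVol3 (δ : ℝ) : ℝ :=
  vol (Metric.cthickening δ
    (segment ℝ (0 : Space 3) (EuclideanSpace.single (0 : Fin 3) (1 : ℝ))))

/-- `𝕎[K]`: the members of `𝕎` contained in `K`. -/
def inSet {n : ℕ} (𝕎 : Finset (Set (Space n))) (K : Set (Space n)) :
    Finset (Set (Space n)) :=
  𝕎.filter fun W => W ⊆ K

/-- `Δ(𝕎, K) = (∑_{W ∈ 𝕎[K]} |W|) / |K|`. -/
def densIn {n : ℕ} (𝕎 : Finset (Set (Space n))) (K : Set (Space n)) : ℝ :=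
  (∑ W ∈ inSet 𝕎 K, vol W) / vol K

/-- `Δ_max(𝕎)`: the supremum of `Δ(𝕎, K)` over bounded convex `K` of positive
volume. -/
def DeltaMax {n : ℕ} (𝕎 : Finset (Set (Space n))) : ℝ :=
  sSup {r : ℝ | ∃ K : Set (Space n),
    Convex ℝ K ∧ IsBounded K ∧ 0 < vol K ∧ densIn 𝕎 K = r}

/-- `C_F(𝕍, K) = (sup_{convex K' ⊆ K} Δ(𝕍, K')) / Δ(𝕍, K)`. -/
def CFrost {n : ℕ} (𝕍 : Finset (Set (Space n))) (K : Set (Space n)) : ℝ :=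
  sSup {r : ℝ | ∃ K' : Set (Space n),
    Convex ℝ K' ∧ K' ⊆ K ∧ 0 < vol K' ∧ densIn 𝕍 K' = r} / densIn 𝕍 K

/-- `Y` is a shading of `𝕍`: each `Y V` is a measurable subset of `V`. -/
def IsShading {n : ℕ} (𝕍 : Finset (Set (Space n)))
    (Y : Set (Space n) → Set (Space n)) : Prop :=
  ∀ V ∈ 𝕍, Y V ⊆ V ∧ MeasurableSet (Y V)

/-- `U(𝕍, Y) = ⋃_{V ∈ 𝕍} Y V`. -/
def shadeUnion {n : ℕ} (𝕍 : Finset (Set (Space n)))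
    (Y : Set (Space n) → Set (Space n)) : Set (Space n) :=
  ⋃ V ∈ 𝕍, Y V

/-- `λ(𝕍, Y) = (∑ |Y V|) / (∑ |V|)`. -/
def shadeDensity {n : ℕ} (𝕍 : Finset (Set (Space n)))
    (Y : Set (Space n) → Set (Space n)) : ℝ :=
  (∑ V ∈ 𝕍, vol (Y V)) / (∑ V ∈ 𝕍, vol V)

/-- `μ(𝕍, Y) = (∑ |Y V|) / |U(𝕍, Y)|`. -/
def shadeMult {n : ℕ} (𝕍 : Finset (Set (Space n)))
    (Y : Set (Space n) → Set (Space n)) : ℝ :=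
  (∑ V ∈ 𝕍, vol (Y V)) / vol (shadeUnion 𝕍 Y)

/-- `μ(𝕍, Y)(x)`: the number of `V ∈ 𝕍` with `x ∈ Y V`. -/
def ptMult {n : ℕ} (𝕍 : Finset (Set (Space n)))
    (Y : Set (Space n) → Set (Space n)) (x : Space n) : ℕ :=
  (𝕍.filter fun V => x ∈ Y V).card

/-- The unit ball `B₁ ⊆ ℝ³`. -/
def B1 : Set (Space 3) := Metric.closedBall 0 1

/-- `𝕋` is a family of `δ`-tubes contained in the unit ball of `ℝ³`. -/
def TubesInB1 (δ : ℝ) (𝕋 : Finset (Set (Space 3))) : Prop :=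
  ∀ T ∈ 𝕋, IsTube 3 δ T ∧ T ⊆ B1

/-- The Katz–Tao Kakeya statement `K_KT(β)`. -/
def KKT (β : ℝ) : Prop :=
  ∀ ε : ℝ, 0 < ε → ∃ η : ℝ, 0 < η ∧ ∃ δ₀ : ℝ, 0 < δ₀ ∧
    ∀ δ : ℝ, 0 < δ → δ ≤ δ₀ →
      ∀ (𝕋 : Finset (Set (Space 3))) (Y : Set (Space 3) → Set (Space 3)),
        TubesInB1 δ 𝕋 → IsShading 𝕋 Y →
        DeltaMax 𝕋 ≤ δ ^ (-η) → δ ^ η ≤ shadeDensity 𝕋 Y →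
        shadeMult 𝕋 Y ≤ δ ^ (-ε) * (𝕋.card : ℝ) ^ β

/-- The Frostman Kakeya statement `K_F(β)`. -/
def KF (β : ℝ) : Prop :=
  ∀ ε : ℝ, 0 < ε → ∃ η : ℝ, 0 < η ∧ ∃ δ₀ : ℝ, 0 < δ₀ ∧
    ∀ δ : ℝ, 0 < δ → δ ≤ δ₀ →
      ∀ (𝕋 : Finset (Set (Space 3))) (Y : Set (Space 3) → Set (Space 3)),
        TubesInB1 δ 𝕋 → IsShading 𝕋 Y →
        CFrost 𝕋 B1 ≤ δ ^ (-η) → δ ^ η ≤ shadeDensity 𝕋 Y →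
        shadeMult 𝕋 Y ≤ δ ^ (-ε) * δ ^ (-(2*β)) *
          ((𝕋.card : ℝ) * tubeVol3 δ) ^ (1 - β/2)

/-- `R` is a rotated rectangular box with side lengths `v 0, …, v (n-1)`. -/
def IsRotatedBox (n : ℕ) (v : Fin n → ℝ) (R : Set (Space n)) : Prop :=
  ∃ e : Space n ≃ᵢ Space n,
    R = e '' {p : Space n | ∀ i, p i ∈ Set.Icc (0 : ℝ) (v i)}

/-- The image of `R` under the homothety of ratio `c` about `x`. -/
def scaleAbout {n : ℕ} (x : Space n) (c : ℝ) (R : Set (Space n)) :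
    Set (Space n) :=
  (fun q => x + c • (q - x)) '' R

/-- `V` has dimensions `v 0 × ⋯ × v (n-1)` with comparability constant `C`:
it is sandwiched between a `C⁻¹`-scaled and a `C`-scaled copy (about a common
point) of some rotated rectangular box with those side lengths. -/
def HasDims (n : ℕ) (C : ℝ) (v : Fin n → ℝ) (V : Set (Space n)) : Prop :=
  ∃ R : Set (Space n), ∃ x : Space n,
    IsRotatedBox n v R ∧ scaleAbout x C⁻¹ R ⊆ V ∧ V ⊆ scaleAbout x C R

/-- The (undirected) angle between the lines spanned by `u` and `v`; in `ℝ³`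
it also equals the angle between the 2-planes orthogonal to `u` and `v`. -/
def lineAngle {n : ℕ} (u v : Space n) : ℝ :=
  min (InnerProductGeometry.angle u v) (Real.pi - InnerProductGeometry.angle u v)

/-- A `δ×1×1` slab with assigned unit normal `ν`: it is (contained in a box)
of thickness `2δ` in the direction `ν`. -/
def IsSlabN (δ : ℝ) (S : Set (Space 3)) (ν : Space 3) : Prop :=
  HasDims 3 2 ![δ, 1, 1] S ∧ ‖ν‖ = 1 ∧
    ∃ c : ℝ, ∀ p ∈ S, abs ((inner ℝ p ν : ℝ) - c) ≤ δ

/-- An `a×b×1` plank with assigned unit normal `ν`; the associated 2-plane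
`TP` is the plane orthogonal to `ν`. -/
def IsPlankN (a b : ℝ) (P : Set (Space 3)) (ν : Space 3) : Prop :=
  HasDims 3 2 ![a, b, 1] P ∧ ‖ν‖ = 1 ∧
    ∃ c : ℝ, ∀ p ∈ P, abs ((inner ℝ p ν : ℝ) - c) ≤ a

/-- `𝕋ρ` is a `ρ`-thickening of `𝕋` with constant `C`: every `T ∈ 𝕋` lies in
at least one and at most `C` tubes of `𝕋ρ`, the tubes of `𝕋ρ` are essentially
distinct, and the numbers `|𝕋[Tρ]|` agree up to a factor `C`. -/
def IsThickening (n : ℕ) (ρ C : ℝ) (𝕋 𝕋ρ : Finset (Set (Space n))) : Prop :=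
  (∀ T' ∈ 𝕋ρ, IsTube n ρ T') ∧
  (∀ T ∈ 𝕋, (∃ T' ∈ 𝕋ρ, T ⊆ T') ∧
      (((𝕋ρ.filter fun T' => T ⊆ T').card : ℝ) ≤ C)) ∧
  (∀ S : Set (Space n), IsTube n ρ S →
      (((𝕋ρ.filter fun T' => T' ⊆ S).card : ℝ) ≤ C)) ∧
  (∀ T₁ ∈ 𝕋ρ, ∀ T₂ ∈ 𝕋ρ,
      (((inSet 𝕋 T₁).card : ℝ) ≤ C * ((inSet 𝕋 T₂).card : ℝ)))

/-- The number of scales `M = ⌈log log (1/δ)⌉`. -/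
def scaleCount (δ : ℝ) : ℕ := ⌈Real.log (Real.log (1 / δ))⌉₊

/-- `𝕋` is a uniform set of `δ`-tubes (with constant `C`): it admits a
`ρ`-thickening at every scale `ρ = δ^(k/M)`, `k = 0, …, M`. -/
def IsUniformTubes (n : ℕ) (C δ : ℝ) (𝕋 : Finset (Set (Space n))) : Prop :=
  ∀ k : ℕ, k ≤ scaleCount δ →
    ∃ 𝕋ρ : Finset (Set (Space n)),
      IsThickening n (δ ^ ((k : ℝ) / (scaleCount δ : ℝ))) C 𝕋 𝕋ρ

/-- `(𝕋, Y)` is a uniform pair: `𝕋` is uniform and for each `x ∈ U(𝕋,Y)` the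
sets `{T ∈ 𝕋 : x ∈ Y T}` are uniform with roughly the same branching numbers
`N k` (up to the factor `C`). -/
def IsUniformPair (n : ℕ) (C δ : ℝ) (𝕋 : Finset (Set (Space n)))
    (Y : Set (Space n) → Set (Space n)) : Prop :=
  IsUniformTubes n C δ 𝕋 ∧
  ∃ N : ℕ → ℝ, ∀ x ∈ shadeUnion 𝕋 Y, ∀ k : ℕ, k ≤ scaleCount δ →
    ∃ 𝕋ρ : Finset (Set (Space n)),
      IsThickening n (δ ^ ((k : ℝ) / (scaleCount δ : ℝ))) C
        (𝕋.filter fun T => x ∈ Y T) 𝕋ρ ∧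
      ∀ Tρ ∈ 𝕋ρ,
        N k ≤ C * (((𝕋.filter fun T => x ∈ Y T ∧ T ⊆ Tρ).card : ℝ)) ∧
        (((𝕋.filter fun T => x ∈ Y T ∧ T ⊆ Tρ).card : ℝ)) ≤ C * N k

/-- `𝕎` factors `𝕍` (with constant `C`, common dimensions `w`, and class
assignment `g`): `𝕍 = ⊔_{W ∈ 𝕎} 𝕍_W` with `𝕍_W = {V ∈ 𝕍 : g V = W}` contained
in `W`, all `W ∈ 𝕎` of dimensions `w`, `Δ_max(𝕎) ≤ C`, each `𝕍_W` Frostman in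
`W` with `Δ(𝕍_W, W)` comparable to `Δ_max(𝕍)`. -/
def Factors (n : ℕ) (C : ℝ) (w : Fin n → ℝ) (𝕎 𝕍 : Finset (Set (Space n)))
    (g : Set (Space n) → Set (Space n)) : Prop :=
  𝕎 = 𝕍.image g ∧
  (∀ V ∈ 𝕍, V ⊆ g V) ∧
  (∀ W ∈ 𝕎, HasDims n C w W) ∧
  DeltaMax 𝕎 ≤ C ∧
  (∀ W ∈ 𝕎,
    C⁻¹ * DeltaMax 𝕍 ≤ densIn (𝕍.filter fun V => g V = W) W ∧
    densIn (𝕍.filter fun V => g V = W) W ≤ DeltaMax 𝕍 ∧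
    ∀ V ∈ 𝕍, C⁻¹ * densIn (𝕍.filter fun V => g V = W) W ≤
      ((𝕍.filter fun V => g V = W).card : ℝ) * vol V / vol W)


private lemma vol_nonneg' {n : ℕ} (A : Set (Space n)) : 0 ≤ vol A := ENNReal.toReal_nonneg

private lemma vol_mono' {n : ℕ} {A B : Set (Space n)} (h : A ⊆ B) (hB : IsBounded B) :
    vol A ≤ vol B := ENNReal.toReal_mono hB.measure_lt_top.ne (measure_mono h)

private lemma densIn_nonneg' {n : ℕ} (𝕍 : Finset (Set (Space n))) (K : Set (Space n)) :
    0 ≤ densIn 𝕍 K :=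
  div_nonneg (Finset.sum_nonneg fun _ _ => vol_nonneg' _) (vol_nonneg' _)

private lemma frost_ub' {n : ℕ} (𝕍 : Finset (Set (Space n))) (K : Set (Space n))
    (hK : IsBounded K) :
    ∀ r ∈ {r : ℝ | ∃ K' : Set (Space n),
      Convex ℝ K' ∧ K' ⊆ K ∧ 0 < vol K' ∧ densIn 𝕍 K' = r}, r ≤ (𝕍.card : ℝ) := by
  rintro r ⟨K', -, hsub, hpos, rfl⟩
  rw [densIn, div_le_iff₀ hpos]
  calc ∑ V ∈ inSet 𝕍 K', vol V ≤ ∑ _V ∈ inSet 𝕍 K', vol K' := by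
        refine Finset.sum_le_sum fun V hV => ?_
        exact vol_mono' (Finset.mem_filter.mp hV).2 (hK.subset hsub)
    _ = ((inSet 𝕍 K').card : ℝ) * vol K' := by rw [Finset.sum_const, nsmul_eq_mul]
    _ ≤ (𝕍.card : ℝ) * vol K' := by
        have : (inSet 𝕍 K').card ≤ 𝕍.card := Finset.card_filter_le _ _
        have h0 : (0:ℝ) ≤ vol K' := hpos.le
        exact mul_le_mul_of_nonneg_right (by exact_mod_cast this) h0

/-- **Remark 3.3(A) (Frostman is inherited upwards)**: there is an absolute
constant `C₀ > 0` so that if `𝕍 = ⊔_{W ∈ 𝕎} 𝕍_W` is `C`-Frostman in `K`,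
each `𝕍_W` nonempty with members contained in `W ⊆ K`, and the densities
`Δ(𝕍_W, W)` all lie in `[D, 2D]`, then `𝕎` is `C₀·C`-Frostman in `K`. -/
theorem frostman_inherited_upwards :
    ∃ C₀ : ℝ, 0 < C₀ ∧
      ∀ (n : ℕ) (K : Set (Space n)),
        Convex ℝ K → IsBounded K → 0 < vol K →
        ∀ (𝕎 : Finset (Set (Space n)))
          (𝕍fam : Set (Space n) → Finset (Set (Space n))) (C D : ℝ),
          (∀ W ∈ 𝕎, Convex ℝ W ∧ W ⊆ K) →
          (∀ W ∈ 𝕎, (𝕍fam W).Nonempty ∧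
            ∀ V ∈ 𝕍fam W, V ⊆ W ∧ Convex ℝ V ∧ IsBounded V) →
          (∀ W₁ ∈ 𝕎, ∀ W₂ ∈ 𝕎, W₁ ≠ W₂ → Disjoint (𝕍fam W₁) (𝕍fam W₂)) →
          CFrost (𝕎.biUnion 𝕍fam) K ≤ C →
          0 < D →
          (∀ W ∈ 𝕎, D ≤ densIn (𝕍fam W) W ∧ densIn (𝕍fam W) W ≤ 2 * D) →
          CFrost 𝕎 K ≤ C₀ * C := by
  refine ⟨2, by norm_num, ?_⟩
  intro n K hKconv hKbd hKvol 𝕎 𝕍fam C D hW h𝕍 hdisj hCF hD hDens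
  set 𝕍 : Finset (Set (Space n)) := 𝕎.biUnion 𝕍fam with h𝕍def
  have hmem : ∀ (𝕏 : Finset (Set (Space n))), densIn 𝕏 K ∈ {r : ℝ | ∃ K' : Set (Space n),
      Convex ℝ K' ∧ K' ⊆ K ∧ 0 < vol K' ∧ densIn 𝕏 K' = r} :=
    fun 𝕏 => ⟨K, hKconv, subset_rfl, hKvol, rfl⟩
  have hbdd : ∀ (𝕏 : Finset (Set (Space n))), BddAbove {r : ℝ | ∃ K' : Set (Space n),
      Convex ℝ K' ∧ K' ⊆ K ∧ 0 < vol K' ∧ densIn 𝕏 K' = r} :=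
    fun 𝕏 => ⟨(𝕏.card : ℝ), frost_ub' 𝕏 K hKbd⟩
  have hC0 : 0 ≤ C := by
    refine le_trans ?_ hCF
    unfold CFrost
    exact div_nonneg (le_trans (densIn_nonneg' _ _) (le_csSup (hbdd _) (hmem _)))
      (densIn_nonneg' _ _)
  by_cases h𝕎e : 𝕎 = ∅
  · subst h𝕎e
    have : densIn (∅ : Finset (Set (Space n))) K = 0 := by
      simp [densIn, inSet]
    rw [CFrost, this, div_zero]
    positivity
  -- every W has positive volume
  have hvolW : ∀ W ∈ 𝕎, 0 < vol W := by
    intro W hWm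
    rcases lt_or_ge 0 (vol W) with h | h
    · exact h
    · exfalso
      have hv0 : vol W = 0 := le_antisymm h (vol_nonneg' W)
      have h1 := (hDens W hWm).1
      rw [densIn, hv0, div_zero] at h1
      linarith
  have hVsub : ∀ W ∈ 𝕎, ∀ V ∈ 𝕍fam W, V ⊆ W := fun W hWm V hV => ((h𝕍 W hWm).2 V hV).1
  have hsumW : ∀ W ∈ 𝕎, D * vol W ≤ ∑ V ∈ 𝕍fam W, vol V := by
    intro W hWm
    have h1 := (hDens W hWm).1
    have heq : inSet (𝕍fam W) W = 𝕍fam W :=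
      Finset.filter_true_of_mem (hVsub W hWm)
    rw [densIn, heq, le_div_iff₀ (hvolW W hWm)] at h1
    linarith
  have hsumW2 : ∀ W ∈ 𝕎, ∑ V ∈ 𝕍fam W, vol V ≤ 2 * D * vol W := by
    intro W hWm
    have h1 := (hDens W hWm).2
    have heq : inSet (𝕍fam W) W = 𝕍fam W :=
      Finset.filter_true_of_mem (hVsub W hWm)
    rw [densIn, heq, div_le_iff₀ (hvolW W hWm)] at h1
    linarith
  -- key lemma 1
  have key1 : ∀ K' : Set (Space n), K' ⊆ K → 0 < vol K' →
      D * densIn 𝕎 K' ≤ densIn 𝕍 K' := by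
    intro K' hsub hpos
    rw [densIn, densIn, ← mul_div_assoc]
    apply div_le_div_of_nonneg_right ?_ hpos.le |>.trans_eq rfl
    case _ =>
      calc D * ∑ W ∈ inSet 𝕎 K', vol W = ∑ W ∈ inSet 𝕎 K', D * vol W := Finset.mul_sum ..
        _ ≤ ∑ W ∈ inSet 𝕎 K', ∑ V ∈ 𝕍fam W, vol V := by
            refine Finset.sum_le_sum fun W hWm => hsumW W ?_
            exact Finset.mem_of_mem_filter W hWm
        _ = ∑ V ∈ (inSet 𝕎 K').biUnion 𝕍fam, vol V := by
            refine (Finset.sum_biUnion ?_).symm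
            intro W₁ hW₁ W₂ hW₂ hne
            exact hdisj W₁ (Finset.mem_of_mem_filter W₁ hW₁)
              W₂ (Finset.mem_of_mem_filter W₂ hW₂) hne
        _ ≤ ∑ V ∈ inSet 𝕍 K', vol V := by
            refine Finset.sum_le_sum_of_subset_of_nonneg ?_ fun V _ _ => vol_nonneg' V
            intro V hV
            obtain ⟨W, hWm, hVW⟩ := Finset.mem_biUnion.mp hV
            have hWm' := Finset.mem_filter.mp hWm
            refine Finset.mem_filter.mpr ⟨Finset.mem_biUnion.mpr ⟨W, hWm'.1, hVW⟩, ?_⟩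
            exact (hVsub W hWm'.1 V hVW).trans hWm'.2
  -- key lemma 2
  have hW𝕎 : inSet 𝕎 K = 𝕎 := Finset.filter_true_of_mem fun W hWm => (hW W hWm).2
  have hV𝕍 : inSet 𝕍 K = 𝕍 := by
    refine Finset.filter_true_of_mem fun V hV => ?_
    obtain ⟨W, hWm, hVW⟩ := Finset.mem_biUnion.mp hV
    exact (hVsub W hWm V hVW).trans (hW W hWm).2
  have key2 : densIn 𝕍 K ≤ 2 * D * densIn 𝕎 K := by
    rw [densIn, densIn, hW𝕎, hV𝕍, ← mul_div_assoc]
    refine div_le_div_of_nonneg_right ?_ hKvol.le |>.trans_eq rfl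
    rw [h𝕍def, Finset.sum_biUnion (fun W₁ hW₁ W₂ hW₂ hne => hdisj W₁ hW₁ W₂ hW₂ hne)]
    calc ∑ W ∈ 𝕎, ∑ V ∈ 𝕍fam W, vol V ≤ ∑ W ∈ 𝕎, 2 * D * vol W :=
          Finset.sum_le_sum fun W hWm => hsumW2 W hWm
      _ = 2 * D * ∑ W ∈ 𝕎, vol W := (Finset.mul_sum ..).symm
  -- positivity of densities
  have hdW : 0 < densIn 𝕎 K := by
    rw [densIn, hW𝕎]
    refine div_pos ?_ hKvol
    exact Finset.sum_pos hvolW (Finset.nonempty_of_ne_empty h𝕎e)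
  have hd𝕍 : 0 < densIn 𝕍 K := lt_of_lt_of_le (by positivity) (key1 K subset_rfl hKvol)
  -- sup bounds
  have hsup𝕍 : sSup {r : ℝ | ∃ K' : Set (Space n),
      Convex ℝ K' ∧ K' ⊆ K ∧ 0 < vol K' ∧ densIn 𝕍 K' = r} ≤ C * densIn 𝕍 K := by
    rw [CFrost, div_le_iff₀ hd𝕍] at hCF
    exact hCF
  have hsup𝕎 : sSup {r : ℝ | ∃ K' : Set (Space n),
      Convex ℝ K' ∧ K' ⊆ K ∧ 0 < vol K' ∧ densIn 𝕎 K' = r} ≤ D⁻¹ * (C * densIn 𝕍 K) := by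
    refine Real.sSup_le ?_ (by positivity)
    rintro r ⟨K', hK'c, hsub, hpos, rfl⟩
    have h1 := key1 K' hsub hpos
    have h2 : densIn 𝕍 K' ≤ C * densIn 𝕍 K :=
      le_trans (le_csSup (hbdd 𝕍) ⟨K', hK'c, hsub, hpos, rfl⟩) hsup𝕍
    rw [← le_div_iff₀' hD] at h1
    exact h1.trans (by rw [div_eq_inv_mul]; exact mul_le_mul_of_nonneg_left h2 (by positivity))
  rw [CFrost, div_le_iff₀ hdW]
  refine hsup𝕎.trans ?_
  have := key2
  have hD' : D ≠ 0 := ne_of_gt hD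
  calc D⁻¹ * (C * densIn 𝕍 K) ≤ D⁻¹ * (C * (2 * D * densIn 𝕎 K)) := by
        refine mul_le_mul_of_nonneg_left (mul_le_mul_of_nonneg_left key2 hC0) (by positivity)
    _ = 2 * C * densIn 𝕎 K := by field_simp
end
end

section
/- There are absolute constants C, c > 0 such that the following holds. Let 0 < δ ≤ θ ≤ 1, η > 0, and let S̃ ⊆ B₂ ⊆ ℝ³ be a θ×1×1 slab. Let 𝕊 be a finite family of δ×1×1 slabs contained in S̃, each slab S assigned a unit normal n(S), with a shading Y satisfying λ(𝕊,Y) ≥ δ^{η}. Define Tri(𝕊) = ∑_{S₁,S₂∈𝕊}|Y(S₁)∩Y(S₂)| and Tri_θ(𝕊) = ∑ over pairs S₁,S₂ ∈ 𝕊 whose angle lies in [θ/2, 2θ] of |Y(S₁)∩Y(S₂)|, where the angle between S₁ and S₂ is the angle between the 2-planes orthogonal to n(S₁) and n(S₂). If θ is a typical intersection angle in the sense that Tri_θ(𝕊) ≥ (log(1/δ))^{-C} · Tri(𝕊) > 0, then |U(𝕊,Y)| ≥ c · (log(1/δ))^{-C} · δ^{2η} · θ. -/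
open MeasureTheory Metric Bornology
open scoped Classical ENNReal RealInnerProductSpace

noncomputable section

/-! ### Auxiliary lemmas for the proof of `slab_L2_estimate` -/

section SlabAux

lemma volume_boxSet (l r : Fin 3 → ℝ) :
    volume {q : Space 3 | ∀ i, q i ∈ Set.Icc (l i) (r i)} =
      ENNReal.ofReal (r 0 - l 0) * ENNReal.ofReal (r 1 - l 1) * ENNReal.ofReal (r 2 - l 2) := by
  have hmp := EuclideanSpace.volume_preserving_symm_measurableEquiv_toLp (Fin 3)
  have hset : {q : Space 3 | ∀ i, q i ∈ Set.Icc (l i) (r i)} =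
      (MeasurableEquiv.toLp 2 (Fin 3 → ℝ)).symm ⁻¹'
        (Set.univ.pi fun i => Set.Icc (l i) (r i)) := by
    ext q
    simp only [MeasurableEquiv.coe_toLp_symm, Set.mem_pi, Pi.le_def, forall_and, Set.mem_setOf_eq, Set.mem_preimage, Set.mem_Icc]
    constructor
    · rintro ⟨h1, h2⟩
      exact ⟨fun i _ => h1 i, fun i _ => h2 i⟩
    · rintro ⟨h1, h2⟩
      exact ⟨fun i => h1 i (Set.mem_univ i), fun i => h2 i (Set.mem_univ i)⟩
  rw [hset, hmp.measure_preimage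
    (MeasurableSet.univ_pi fun i => measurableSet_Icc).nullMeasurableSet]
  rw [volume_pi_pi]
  simp [Fin.prod_univ_three, Real.volume_Icc]

open scoped Pointwise in
lemma volume_isometry_image (e : Space 3 ≃ᵢ Space 3) {A : Set (Space 3)}
    (hA : MeasurableSet A) : volume (e '' A) = volume A := by
  have h1 : e '' A = (e 0) +ᵥ (⇑e.toRealLinearIsometryEquiv '' A) := by
    ext y
    simp only [Set.mem_image, Set.mem_vadd_set]
    constructor
    · rintro ⟨p, hp, rfl⟩
      exact ⟨e.toRealLinearIsometryEquiv p, ⟨p, hp, rfl⟩, by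
        simp [IsometryEquiv.toRealLinearIsometryEquiv_apply, vadd_eq_add]⟩
    · rintro ⟨z, ⟨p, hp, rfl⟩, rfl⟩
      exact ⟨p, hp, by
        simp [IsometryEquiv.toRealLinearIsometryEquiv_apply, vadd_eq_add]⟩
  rw [h1, measure_vadd]
  have h2 : ⇑e.toRealLinearIsometryEquiv '' A =
      ⇑e.toRealLinearIsometryEquiv.symm ⁻¹' A := by
    ext y
    constructor
    · rintro ⟨p, hp, rfl⟩; simpa using hp
    · intro hy; exact ⟨e.toRealLinearIsometryEquiv.symm y, hy, by simp⟩
  rw [h2, e.toRealLinearIsometryEquiv.symm.measurePreserving.measure_preimage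
    hA.nullMeasurableSet]

lemma volume_rotatedBox {v : Fin 3 → ℝ} {R : Set (Space 3)} (h : IsRotatedBox 3 v R) :
    volume R = ENNReal.ofReal (v 0) * ENNReal.ofReal (v 1) * ENNReal.ofReal (v 2) := by
  obtain ⟨e, rfl⟩ := h
  rw [volume_isometry_image]
  · have := volume_boxSet (fun _ => 0) v
    simpa using this
  · have hb : {p : Space 3 | ∀ i, p i ∈ Set.Icc (0:ℝ) (v i)} =
        ⋂ i, (fun p : Space 3 => p i) ⁻¹' Set.Icc (0:ℝ) (v i) := by ext p; simp
    rw [hb]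
    exact MeasurableSet.iInter fun i =>
      ((measurable_pi_apply (a := i)).comp
        (MeasurableEquiv.toLp 2 (Fin 3 → ℝ)).symm.measurable) measurableSet_Icc

open scoped Pointwise in
lemma volume_scaleAbout (x : Space 3) (c : ℝ) (R : Set (Space 3)) :
    volume (scaleAbout x c R) = ENNReal.ofReal |c ^ 3| * volume R := by
  have h1 : scaleAbout x c R = (x - c • x) +ᵥ (c • R) := by
    ext y
    simp only [scaleAbout, Set.mem_image, Set.mem_vadd_set, Set.mem_smul_set]
    constructor
    · rintro ⟨p, hp, rfl⟩
      exact ⟨c • p, ⟨p, hp, rfl⟩, by simp [vadd_eq_add, smul_sub]; abel⟩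
    · rintro ⟨z, ⟨p, hp, rfl⟩, rfl⟩
      exact ⟨p, hp, by simp [vadd_eq_add, smul_sub]; abel⟩
  rw [h1, measure_vadd, Measure.addHaar_smul]
  norm_num [finrank_euclideanSpace_fin]

lemma volume_slab_lower {δ : ℝ} (hδ : 0 < δ) {S : Set (Space 3)}
    (h : HasDims 3 2 ![δ, 1, 1] S) : ENNReal.ofReal (δ / 8) ≤ volume S := by
  obtain ⟨R, x, hR, hsub, -⟩ := h
  have h1 : volume (scaleAbout x 2⁻¹ R) = ENNReal.ofReal (δ / 8) := by
    rw [volume_scaleAbout, volume_rotatedBox hR]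
    simp only [Matrix.cons_val_zero, Matrix.cons_val_one, Matrix.head_cons,
      Matrix.cons_val_two, Matrix.tail_cons]
    rw [← ENNReal.ofReal_mul (by positivity), ← ENNReal.ofReal_mul (by positivity),
      ← ENNReal.ofReal_mul (by positivity)]
    norm_num
    congr 1
    rw [← ENNReal.ofReal_mul (by norm_num)]; congr 1
    ring
  calc ENNReal.ofReal (δ / 8) = volume (scaleAbout x 2⁻¹ R) := h1.symm
    _ ≤ volume S := measure_mono hsub

lemma volume_two_slabs {δ θ c₁ c₂ : ℝ} (hδ : 0 < δ) (hθ : 0 < θ)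
    {ν₁ ν₂ : Space 3} (h1 : ‖ν₁‖ = 1) (h2 : ‖ν₂‖ = 1)
    (hang : θ / 2 ≤ lineAngle ν₁ ν₂)
    {A : Set (Space 3)} (hA : A ⊆ Metric.closedBall 0 2)
    (hA1 : ∀ p ∈ A, |⟪p, ν₁⟫ - c₁| ≤ δ) (hA2 : ∀ p ∈ A, |⟪p, ν₂⟫ - c₂| ≤ δ) :
    volume A ≤ ENNReal.ofReal (16 * Real.pi * δ ^ 2 / θ) := by
  set α := InnerProductGeometry.angle ν₁ ν₂ with hα
  set a : ℝ := ⟪ν₁, ν₂⟫ with ha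
  set b : ℝ := Real.sin α with hbdef
  have hα0 : 0 ≤ α := InnerProductGeometry.angle_nonneg _ _
  have hαπ : α ≤ Real.pi := InnerProductGeometry.angle_le_pi _ _
  have hacos : a = Real.cos α := by
    rw [hα, ha]
    rw [InnerProductGeometry.cos_angle, h1, h2]
    norm_num
  have hT2 : lineAngle ν₁ ν₂ ≤ Real.pi / 2 := by
    rcases le_total α (Real.pi / 2) with h | h
    · exact le_trans (min_le_left _ _) h
    · exact le_trans (min_le_right _ _) (by linarith)
  have hT0 : 0 ≤ lineAngle ν₁ ν₂ := le_trans (by linarith) hang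
  have hsin_eq : Real.sin (lineAngle ν₁ ν₂) = b := by
    rcases le_total α (Real.pi - α) with h | h
    · rw [lineAngle, min_eq_left h]
    · rw [lineAngle, min_eq_right h, Real.sin_pi_sub]
  have hbθ : θ / Real.pi ≤ b := by
    have := Real.mul_le_sin hT0 hT2
    rw [hsin_eq] at this
    have h3 : 2 / Real.pi * (θ / 2) ≤ 2 / Real.pi * lineAngle ν₁ ν₂ :=
      mul_le_mul_of_nonneg_left hang (by positivity)
    calc θ / Real.pi = 2 / Real.pi * (θ / 2) := by ring
      _ ≤ 2 / Real.pi * lineAngle ν₁ ν₂ := h3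
      _ ≤ b := this
  have hbpos : 0 < b := lt_of_lt_of_le (by positivity) hbθ
  have hb2 : b ^ 2 = 1 - a ^ 2 := by
    rw [hbdef, hacos, Real.sin_sq]
  set w : Space 3 := ν₂ - a • ν₁ with hw
  have hperp : ⟪ν₁, w⟫ = 0 := by
    rw [hw, inner_sub_right, real_inner_smul_right, real_inner_self_eq_norm_sq, h1]
    ring
  have hwnormsq : ‖w‖ ^ 2 = b ^ 2 := by
    have e1 : ‖w‖ ^ 2 = ⟪w, w⟫ := (real_inner_self_eq_norm_sq w).symm
    have e2 : ⟪w, w⟫ = 1 - a * a := by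
      rw [hw]
      simp only [inner_sub_left, inner_sub_right, real_inner_smul_left,
        real_inner_smul_right, real_inner_self_eq_norm_sq, h1, h2,
        real_inner_comm ν₂ ν₁, ← ha]
      rw [real_inner_comm ν₁ ν₂, norm_smul, h1, Real.norm_eq_abs, mul_one, sq_abs, ← ha]
      ring
    rw [e1, e2, hb2]
    ring
  have hwnorm : ‖w‖ = b := by
    have : ‖w‖ = Real.sqrt (b ^ 2) := by rw [← hwnormsq, Real.sqrt_sq (norm_nonneg w)]
    rwa [Real.sqrt_sq hbpos.le] at this
  set e₂ : Space 3 := b⁻¹ • w with he₂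
  have he₂norm : ‖e₂‖ = 1 := by
    rw [he₂, norm_smul, hwnorm, Real.norm_eq_abs, abs_inv, abs_of_pos hbpos,
      inv_mul_cancel₀ hbpos.ne']
  have hperp₂ : ⟪ν₁, e₂⟫ = 0 := by
    rw [he₂, real_inner_smul_right, hperp]; ring
  have hν₂eq : ν₂ = a • ν₁ + b • e₂ := by
    rw [he₂, smul_smul, mul_inv_cancel₀ hbpos.ne', one_smul, hw]
    abel
  have hcard : Module.finrank ℝ (Space 3) = Fintype.card (Fin 3) := by
    simp [finrank_euclideanSpace_fin]
  set v : Fin 3 → Space 3 := ![ν₁, e₂, 0] with hv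
  have hon : Orthonormal ℝ (Set.restrict ({0, 1} : Set (Fin 3)) v) := by
    rw [orthonormal_iff_ite]
    rintro ⟨i, hi⟩ ⟨j, hj⟩
    have hi' : i = 0 ∨ i = 1 := by simpa using hi
    have hj' : j = 0 ∨ j = 1 := by simpa using hj
    have i00 : ⟪ν₁, ν₁⟫ = 1 := by rw [real_inner_self_eq_norm_sq, h1]; norm_num
    have i11 : ⟪e₂, e₂⟫ = 1 := by rw [real_inner_self_eq_norm_sq, he₂norm]; norm_num
    have i10 : ⟪e₂, ν₁⟫ = 0 := by rw [real_inner_comm]; exact hperp₂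
    rcases hi' with rfl | rfl <;> rcases hj' with rfl | rfl
    · rw [if_pos rfl]; simpa [hv, Set.restrict] using i00
    · rw [if_neg (by simp [Subtype.ext_iff])]; simpa [hv, Set.restrict] using hperp₂
    · rw [if_neg (by simp [Subtype.ext_iff])]; simpa [hv, Set.restrict] using i10
    · rw [if_pos rfl]; simpa [hv, Set.restrict] using i11
  obtain ⟨B, hB⟩ := hon.exists_orthonormalBasis_extension_of_card_eq hcard
  have hB0 : B 0 = ν₁ := hB 0 (by simp)
  have hB1 : B 1 = e₂ := hB 1 (by simp)
  set T : Set (Space 3) :=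
    {q : Space 3 | (|q 0 - c₁| ≤ δ ∧ |a * q 0 + b * q 1 - c₂| ≤ δ) ∧ |q 2| ≤ 2} with hT
  have hsub : A ⊆ ⇑B.repr ⁻¹' T := by
    intro p hp
    have hq : ∀ i, B.repr p i = ⟪B i, p⟫ := fun i => B.repr_apply_apply p i
    refine ⟨⟨?_, ?_⟩, ?_⟩
    · rw [hq 0, hB0, real_inner_comm]
      exact hA1 p hp
    · rw [hq 0, hq 1, hB0, hB1]
      have : a * ⟪ν₁, p⟫ + b * ⟪e₂, p⟫ = ⟪p, ν₂⟫ := by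
        rw [hν₂eq, inner_add_right, real_inner_smul_right, real_inner_smul_right,
          real_inner_comm p ν₁, real_inner_comm p e₂]
      rw [this]
      exact hA2 p hp
    · rw [hq 2]
      calc |⟪B 2, p⟫| ≤ ‖B 2‖ * ‖p‖ := abs_real_inner_le_norm _ _
        _ ≤ 1 * 2 := by
            rw [B.orthonormal.1 2]
            simpa [mem_closedBall_zero_iff] using
              mul_le_mul_of_nonneg_left (mem_closedBall_zero_iff.mp (hA hp)) zero_le_one
        _ = 2 := one_mul 2
  set M : Matrix (Fin 3) (Fin 3) ℝ := !![1, 0, 0; a, b, 0; 0, 0, 1] with hM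
  set box : Set (Space 3) :=
    {q : Space 3 | ∀ i, q i ∈ Set.Icc (![c₁ - δ, c₂ - δ, -2] i) (![c₁ + δ, c₂ + δ, 2] i)}
    with hbox
  have happly : ∀ (q : Space 3) (i : Fin 3),
      Matrix.toEuclideanLin M q i = (M.mulVec (fun j => q j)) i := fun q i => rfl
  have hTpre : T = Matrix.toEuclideanLin M ⁻¹' box := by
    ext q
    simp only [hT, Set.mem_setOf_eq, Set.mem_preimage, hbox]
    constructor
    · rintro ⟨⟨hx, hy⟩, hz⟩ i
      rw [abs_le] at hx hy hz
      fin_cases i <;>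
        simp [happly, Matrix.mulVec, dotProduct, Fin.sum_univ_three, hM, Matrix.vecHead, Matrix.vecTail] <;>
        constructor <;> linarith [hx.1, hx.2, hy.1, hy.2, hz.1, hz.2]
    · intro h
      have h0 := h 0; have h1' := h 1; have h2' := h 2
      simp [happly, Matrix.mulVec, dotProduct, Fin.sum_univ_three, hM, Matrix.vecHead, Matrix.vecTail] at h0 h1' h2'
      refine ⟨⟨abs_le.mpr ⟨by linarith [h0.1], by linarith [h0.2]⟩,
        abs_le.mpr ⟨by linarith [h1'.1], by linarith [h1'.2]⟩⟩,
        abs_le.mpr ⟨by linarith [h2'.1], by linarith [h2'.2]⟩⟩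
  have hdet : LinearMap.det (Matrix.toEuclideanLin M) = b := by
    rw [Matrix.toEuclideanLin_eq_toLin, LinearMap.det_toLin]
    rw [hM, Matrix.det_fin_three]
    simp
  have hboxvol : volume box = ENNReal.ofReal (16 * δ ^ 2) := by
    rw [hbox, volume_boxSet]
    simp only [Matrix.cons_val_zero, Matrix.cons_val_one, Matrix.head_cons,
      Matrix.cons_val_two, Matrix.tail_cons]
    rw [show c₁ + δ - (c₁ - δ) = 2 * δ by ring, show c₂ + δ - (c₂ - δ) = 2 * δ by ring,
      show (2:ℝ) - (-2) = 4 by norm_num,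
      ← ENNReal.ofReal_mul (by positivity), ← ENNReal.ofReal_mul (by positivity)]
    congr 1
    ring
  have hTvol : volume T = ENNReal.ofReal (16 * δ ^ 2 / b) := by
    rw [hTpre, MeasureTheory.Measure.addHaar_preimage_linearMap volume
      (by rw [hdet]; exact hbpos.ne') box, hdet, hboxvol,
      ← ENNReal.ofReal_mul (by positivity)]
    congr 1
    rw [abs_inv, abs_of_pos hbpos]
    ring
  have hmp := B.measurePreserving_repr
  have hTmeas : MeasurableSet T := by
    rw [hTpre]
    have hboxm : MeasurableSet box := by
      have hb2' : box = ⋂ i, (fun p : Space 3 => p i) ⁻¹'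
          Set.Icc (![c₁ - δ, c₂ - δ, -2] i) (![c₁ + δ, c₂ + δ, 2] i) := by ext p; simp [hbox]
      rw [hb2']
      exact MeasurableSet.iInter fun i =>
        ((measurable_pi_apply (a := i)).comp
          (MeasurableEquiv.toLp 2 (Fin 3 → ℝ)).symm.measurable) measurableSet_Icc
    exact hboxm.preimage (LinearMap.continuous_of_finiteDimensional _).measurable
  calc volume A ≤ volume (⇑B.repr ⁻¹' T) := measure_mono hsub
    _ = volume T := hmp.measure_preimage hTmeas.nullMeasurableSet
    _ = ENNReal.ofReal (16 * δ ^ 2 / b) := hTvol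
    _ ≤ ENNReal.ofReal (16 * Real.pi * δ ^ 2 / θ) := by
        apply ENNReal.ofReal_le_ofReal
        rw [div_le_div_iff₀ hbpos (by positivity)]
        have hπ : 0 < Real.pi := Real.pi_pos
        have h5 : θ ≤ Real.pi * b := by
          rw [div_le_iff₀ hπ] at hbθ
          linarith [hbθ]
        nlinarith [sq_nonneg δ, mul_le_mul_of_nonneg_left h5
          (by positivity : (0:ℝ) ≤ 16 * δ ^ 2)]

lemma cs_bound (𝕊 : Finset (Set (Space 3))) (Y : Set (Space 3) → Set (Space 3))
    (hmeas : ∀ S ∈ 𝕊, MeasurableSet (Y S)) :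
    (∑ S ∈ 𝕊, volume (Y S)) ^ 2 ≤
      volume (shadeUnion 𝕊 Y) * ∑ S₁ ∈ 𝕊, ∑ S₂ ∈ 𝕊, volume (Y S₁ ∩ Y S₂) := by
  set U : Set (Space 3) := shadeUnion 𝕊 Y with hU
  have hUmeas : MeasurableSet U := 𝕊.measurableSet_biUnion hmeas
  have hsubU : ∀ S ∈ 𝕊, Y S ⊆ U := fun S hS => Set.subset_biUnion_of_mem hS
  set μ : Measure (Space 3) := volume.restrict U with hμ
  set f : Space 3 → ℝ≥0∞ := fun x => ∑ S ∈ 𝕊, (Y S).indicator (fun _ => (1:ℝ≥0∞)) x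
    with hf
  have hfm : Measurable f :=
    Finset.measurable_sum _ fun S hS => measurable_const.indicator (hmeas S hS)
  have hint1 : ∫⁻ x, f x ∂μ = ∑ S ∈ 𝕊, volume (Y S) := by
    rw [show (∫⁻ x, f x ∂μ) =
        ∫⁻ x, ∑ S ∈ 𝕊, (Y S).indicator (fun _ => (1:ℝ≥0∞)) x ∂μ from rfl,
      lintegral_finset_sum _ fun S hS => measurable_const.indicator (hmeas S hS)]
    refine Finset.sum_congr rfl fun S hS => ?_
    rw [lintegral_indicator_const (hmeas S hS), one_mul, hμ,
      Measure.restrict_apply (hmeas S hS), Set.inter_eq_left.mpr (hsubU S hS)]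
  have hps : ∀ x, f x * f x =
      ∑ S₁ ∈ 𝕊, ∑ S₂ ∈ 𝕊, (Y S₁ ∩ Y S₂).indicator (fun _ => (1:ℝ≥0∞)) x := by
    intro x
    rw [hf, Finset.sum_mul_sum]
    refine Finset.sum_congr rfl fun S₁ _ => Finset.sum_congr rfl fun S₂ _ => ?_
    by_cases h1 : x ∈ Y S₁ <;> by_cases h2 : x ∈ Y S₂ <;>
      simp [Set.indicator_apply, h1, h2, Set.mem_inter_iff]
  have hint2 : ∫⁻ x, f x * f x ∂μ ≤ ∑ S₁ ∈ 𝕊, ∑ S₂ ∈ 𝕊, volume (Y S₁ ∩ Y S₂) := by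
    calc ∫⁻ x, f x * f x ∂μ
        = ∑ S₁ ∈ 𝕊, ∑ S₂ ∈ 𝕊, μ (Y S₁ ∩ Y S₂) := by
          simp_rw [hps]
          rw [lintegral_finset_sum _ fun S₁ hS₁ => Finset.measurable_sum _ fun S₂ hS₂ =>
            measurable_const.indicator ((hmeas S₁ hS₁).inter (hmeas S₂ hS₂))]
          refine Finset.sum_congr rfl fun S₁ hS₁ => ?_
          rw [lintegral_finset_sum _ fun S₂ hS₂ =>
            measurable_const.indicator ((hmeas S₁ hS₁).inter (hmeas S₂ hS₂))]
          refine Finset.sum_congr rfl fun S₂ hS₂ => ?_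
          rw [lintegral_indicator_const ((hmeas S₁ hS₁).inter (hmeas S₂ hS₂)), one_mul]
      _ ≤ ∑ S₁ ∈ 𝕊, ∑ S₂ ∈ 𝕊, volume (Y S₁ ∩ Y S₂) := by
          refine Finset.sum_le_sum fun S₁ hS₁ => Finset.sum_le_sum fun S₂ hS₂ => ?_
          rw [hμ, Measure.restrict_apply ((hmeas S₁ hS₁).inter (hmeas S₂ hS₂))]
          exact measure_mono Set.inter_subset_left
  have hfx2 : ∀ x, f x ^ (2:ℝ) = f x * f x := by
    intro x
    rw [show (2:ℝ) = ((2:ℕ):ℝ) by norm_num, ENNReal.rpow_natCast, pow_two]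
  have hCS : ∫⁻ x, f x ∂μ ≤
      (∫⁻ x, f x * f x ∂μ) ^ (1/(2:ℝ)) * (μ Set.univ) ^ (1/(2:ℝ)) := by
    have h := ENNReal.lintegral_mul_le_Lp_mul_Lq μ
      Real.HolderConjugate.two_two
      hfm.aemeasurable (measurable_const (a := (1:ℝ≥0∞))).aemeasurable
    simp only [Pi.mul_apply, mul_one] at h
    simp_rw [hfx2] at h
    calc ∫⁻ x, f x ∂μ ≤ (∫⁻ x, f x * f x ∂μ) ^ (1/(2:ℝ)) *
          (∫⁻ _x, (1:ℝ≥0∞) ^ (2:ℝ) ∂μ) ^ (1/(2:ℝ)) := h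
      _ = (∫⁻ x, f x * f x ∂μ) ^ (1/(2:ℝ)) * (μ Set.univ) ^ (1/(2:ℝ)) := by
          congr 1
          rw [show ((1:ℝ≥0∞) ^ (2:ℝ)) = 1 by norm_num]
          simp
  have h2 := ENNReal.rpow_le_rpow hCS (by norm_num : (0:ℝ) ≤ 2)
  rw [ENNReal.mul_rpow_of_nonneg _ _ (by norm_num : (0:ℝ) ≤ 2),
    ← ENNReal.rpow_mul, ← ENNReal.rpow_mul] at h2
  norm_num at h2
  rw [hint1] at h2
  calc (∑ S ∈ 𝕊, volume (Y S)) ^ 2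
      ≤ (∫⁻ x, f x * f x ∂μ) * μ Set.univ := h2
    _ ≤ (∑ S₁ ∈ 𝕊, ∑ S₂ ∈ 𝕊, volume (Y S₁ ∩ Y S₂)) * volume U := by
        rw [hμ, Measure.restrict_apply_univ]
        exact mul_le_mul_left hint2 _
    _ = volume U * ∑ S₁ ∈ 𝕊, ∑ S₂ ∈ 𝕊, volume (Y S₁ ∩ Y S₂) := mul_comm _ _

end SlabAux

/-- **Lemma 6.3 (L² estimate for slabs)**: there are absolute constants
`C, c > 0` so that if `𝕊` is a family of `δ×1×1` slabs (with assigned unit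
normals) contained in a `θ×1×1` slab `S̃ ⊆ B₂`, shaded with density `≥ δ^η`,
and `θ` is a typical intersection angle
(`Tri_θ(𝕊) ≥ (log 1/δ)^(-C) Tri(𝕊) > 0`), then
`|U(𝕊,Y)| ≥ c (log 1/δ)^(-C) δ^(2η) θ`. -/
theorem slab_L2_estimate :
    ∃ C : ℝ, 0 < C ∧ ∃ c : ℝ, 0 < c ∧
      ∀ δ θ η : ℝ, 0 < δ → δ ≤ θ → θ ≤ 1 → 0 < η →
        ∀ Stilde : Set (Space 3),
          Stilde ⊆ Metric.closedBall (0 : Space 3) 2 →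
          HasDims 3 2 ![θ, 1, 1] Stilde →
          ∀ (𝕊 : Finset (Set (Space 3))) (nrm : Set (Space 3) → Space 3)
            (Y : Set (Space 3) → Set (Space 3)),
            (∀ S ∈ 𝕊, S ⊆ Stilde ∧ IsSlabN δ S (nrm S)) →
            IsShading 𝕊 Y → δ ^ η ≤ shadeDensity 𝕊 Y →
            0 < (∑ S₁ ∈ 𝕊, ∑ S₂ ∈ 𝕊,
                  if θ/2 ≤ lineAngle (nrm S₁) (nrm S₂) ∧
                      lineAngle (nrm S₁) (nrm S₂) ≤ 2*θ
                  then vol (Y S₁ ∩ Y S₂) else 0) →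
            (Real.log (1/δ)) ^ (-C) *
                (∑ S₁ ∈ 𝕊, ∑ S₂ ∈ 𝕊, vol (Y S₁ ∩ Y S₂)) ≤
              (∑ S₁ ∈ 𝕊, ∑ S₂ ∈ 𝕊,
                  if θ/2 ≤ lineAngle (nrm S₁) (nrm S₂) ∧
                      lineAngle (nrm S₁) (nrm S₂) ≤ 2*θ
                  then vol (Y S₁ ∩ Y S₂) else 0) →
            c * (Real.log (1/δ)) ^ (-C) * δ ^ (2*η) * θ ≤
              vol (shadeUnion 𝕊 Y) := by
  classical
  refine ⟨1, one_pos, (1024 * Real.pi)⁻¹, by positivity, ?_⟩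
  intro δ θ η hδ hδθ hθ1 hη Stilde hStB2 _hStdims 𝕊 nrm Y hSlab hShade hDens hTriθpos hTyp
  have hB2fin : volume (Metric.closedBall (0 : Space 3) 2) ≠ ⊤ :=
    measure_closedBall_lt_top.ne
  have hθpos : 0 < θ := lt_of_lt_of_le hδ hδθ
  have hπ : (0:ℝ) < Real.pi := Real.pi_pos
  have hYm : ∀ S ∈ 𝕊, MeasurableSet (Y S) := fun S hS => (hShade S hS).2
  have hYsub : ∀ S ∈ 𝕊, Y S ⊆ S := fun S hS => (hShade S hS).1
  have hSB2 : ∀ S ∈ 𝕊, S ⊆ Metric.closedBall (0 : Space 3) 2 :=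
    fun S hS => (hSlab S hS).1.trans hStB2
  have hSfin : ∀ S ∈ 𝕊, volume S ≠ ⊤ :=
    fun S hS => ((measure_mono (hSB2 S hS)).trans_lt measure_closedBall_lt_top).ne
  have hYfin : ∀ S ∈ 𝕊, volume (Y S) ≠ ⊤ :=
    fun S hS => ((measure_mono ((hYsub S hS).trans (hSB2 S hS))).trans_lt
      measure_closedBall_lt_top).ne
  have hYYfin : ∀ S₁ ∈ 𝕊, ∀ S₂ ∈ 𝕊, volume (Y S₁ ∩ Y S₂) ≠ ⊤ := fun S₁ hS₁ S₂ _ =>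
    ((measure_mono (Set.inter_subset_left.trans
      ((hYsub S₁ hS₁).trans (hSB2 S₁ hS₁)))).trans_lt measure_closedBall_lt_top).ne
  have hUB2 : shadeUnion 𝕊 Y ⊆ Metric.closedBall (0 : Space 3) 2 :=
    Set.iUnion₂_subset fun S hS => (hYsub S hS).trans (hSB2 S hS)
  have hUfin : volume (shadeUnion 𝕊 Y) ≠ ⊤ :=
    ((measure_mono hUB2).trans_lt measure_closedBall_lt_top).ne
  have hu0 : 0 ≤ vol (shadeUnion 𝕊 Y) := ENNReal.toReal_nonneg
  -- 𝕊 is nonempty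
  have hne : 𝕊.Nonempty := by
    rcases Finset.eq_empty_or_nonempty 𝕊 with h | h
    · rw [h] at hTriθpos; simp at hTriθpos
    · exact h
  have hNpos : 0 < (𝕊.card : ℝ) := by exact_mod_cast Finset.card_pos.mpr hne
  set N : ℝ := (𝕊.card : ℝ) with hN
  set K : ℝ := Real.log (1/δ) ^ (-(1:ℝ)) with hKdef
  have hKnn : 0 ≤ K :=
    Real.rpow_nonneg (Real.log_nonneg (by rw [le_div_iff₀ hδ]; linarith)) _
  -- lower bound for each slab volume
  have hvolS : ∀ S ∈ 𝕊, δ / 8 ≤ vol S := fun S hS =>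
    (ENNReal.ofReal_le_iff_le_toReal (hSfin S hS)).mp
      (volume_slab_lower hδ (hSlab S hS).2.1)
  have hSigS : N * (δ / 8) ≤ ∑ S ∈ 𝕊, vol S := by
    have := Finset.card_nsmul_le_sum 𝕊 (fun S => vol S) (δ / 8) hvolS
    rwa [nsmul_eq_mul] at this
  have hSigSpos : 0 < ∑ S ∈ 𝕊, vol S := lt_of_lt_of_le (by positivity) hSigS
  -- shading density
  have hSigY : δ ^ η * (∑ S ∈ 𝕊, vol S) ≤ ∑ S ∈ 𝕊, vol (Y S) := by
    have h := hDens
    rw [shadeDensity, le_div_iff₀ hSigSpos] at h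
    linarith [h]
  have hm1 : δ ^ η * (N * (δ / 8)) ≤ ∑ S ∈ 𝕊, vol (Y S) := by
    have h := mul_le_mul_of_nonneg_left hSigS (le_of_lt (Real.rpow_pos_of_pos hδ η))
    linarith
  have hm0 : 0 ≤ δ ^ η * (N * (δ / 8)) := by
    have := (Real.rpow_pos_of_pos hδ η).le
    positivity
  -- Cauchy-Schwarz, in real form
  have hCSr : (∑ S ∈ 𝕊, vol (Y S)) ^ 2 ≤
      vol (shadeUnion 𝕊 Y) * ∑ S₁ ∈ 𝕊, ∑ S₂ ∈ 𝕊, vol (Y S₁ ∩ Y S₂) := by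
    have hcs := cs_bound 𝕊 Y hYm
    have hpairfin : ∀ S₁ ∈ 𝕊, (∑ S₂ ∈ 𝕊, volume (Y S₁ ∩ Y S₂)) ≠ ⊤ := by
      intro S₁ hS₁
      exact (ENNReal.sum_lt_top.mpr fun S₂ hS₂ =>
        (hYYfin S₁ hS₁ S₂ hS₂).lt_top).ne
    have hTri_ne : (∑ S₁ ∈ 𝕊, ∑ S₂ ∈ 𝕊, volume (Y S₁ ∩ Y S₂)) ≠ ⊤ :=
      (ENNReal.sum_lt_top.mpr fun S₁ hS₁ => (hpairfin S₁ hS₁).lt_top).ne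
    have hmono := ENNReal.toReal_mono (ENNReal.mul_ne_top hUfin hTri_ne) hcs
    rw [ENNReal.toReal_pow, ENNReal.toReal_mul, ENNReal.toReal_sum hYfin,
      ENNReal.toReal_sum hpairfin] at hmono
    have heq : ∀ S₁ ∈ 𝕊, (∑ S₂ ∈ 𝕊, volume (Y S₁ ∩ Y S₂)).toReal
        = ∑ S₂ ∈ 𝕊, vol (Y S₁ ∩ Y S₂) := fun S₁ hS₁ =>
      ENNReal.toReal_sum (fun S₂ hS₂ => hYYfin S₁ hS₁ S₂ hS₂)
    rw [Finset.sum_congr rfl heq] at hmono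
    exact hmono
  -- pointwise bound on the θ-restricted pairs
  have hQ : (0:ℝ) ≤ 16 * Real.pi * δ ^ 2 / θ := by positivity
  have hpair : ∀ S₁ ∈ 𝕊, ∀ S₂ ∈ 𝕊,
      (if θ/2 ≤ lineAngle (nrm S₁) (nrm S₂) ∧ lineAngle (nrm S₁) (nrm S₂) ≤ 2*θ
        then vol (Y S₁ ∩ Y S₂) else 0) ≤ 16 * Real.pi * δ ^ 2 / θ := by
    intro S₁ hS₁ S₂ hS₂
    split_ifs with hcond
    · obtain ⟨c₁, hc₁⟩ := (hSlab S₁ hS₁).2.2.2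
      obtain ⟨c₂, hc₂⟩ := (hSlab S₂ hS₂).2.2.2
      have hbound := volume_two_slabs hδ hθpos
        (hSlab S₁ hS₁).2.2.1 (hSlab S₂ hS₂).2.2.1 hcond.1
        (A := Y S₁ ∩ Y S₂)
        (Set.inter_subset_left.trans ((hYsub S₁ hS₁).trans (hSB2 S₁ hS₁)))
        (fun p hp => hc₁ p ((hYsub S₁ hS₁) hp.1))
        (fun p hp => hc₂ p ((hYsub S₂ hS₂) hp.2))
      have h := ENNReal.toReal_mono ENNReal.ofReal_ne_top hbound
      rwa [ENNReal.toReal_ofReal hQ] at h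
    · exact hQ
  -- bound for the θ-restricted triple sum
  have hTriθbound : (∑ S₁ ∈ 𝕊, ∑ S₂ ∈ 𝕊,
      if θ/2 ≤ lineAngle (nrm S₁) (nrm S₂) ∧ lineAngle (nrm S₁) (nrm S₂) ≤ 2*θ
        then vol (Y S₁ ∩ Y S₂) else 0) ≤ N * (N * (16 * Real.pi * δ ^ 2 / θ)) := by
    have hinner : ∀ S₁ ∈ 𝕊, (∑ S₂ ∈ 𝕊,
        if θ/2 ≤ lineAngle (nrm S₁) (nrm S₂) ∧ lineAngle (nrm S₁) (nrm S₂) ≤ 2*θ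
          then vol (Y S₁ ∩ Y S₂) else 0) ≤ N * (16 * Real.pi * δ ^ 2 / θ) := by
      intro S₁ hS₁
      have := Finset.sum_le_card_nsmul 𝕊 _ (16 * Real.pi * δ ^ 2 / θ) (hpair S₁ hS₁)
      rwa [nsmul_eq_mul] at this
    have := Finset.sum_le_card_nsmul 𝕊 _ (N * (16 * Real.pi * δ ^ 2 / θ)) hinner
    rwa [nsmul_eq_mul] at this
  -- combine everything
  have heq1 : K * (vol (shadeUnion 𝕊 Y) * ∑ S₁ ∈ 𝕊, ∑ S₂ ∈ 𝕊, vol (Y S₁ ∩ Y S₂))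
      = vol (shadeUnion 𝕊 Y) * (K * ∑ S₁ ∈ 𝕊, ∑ S₂ ∈ 𝕊, vol (Y S₁ ∩ Y S₂)) := by
    ring
  have a1 : (δ ^ η * (N * (δ / 8))) ^ 2 ≤ (∑ S ∈ 𝕊, vol (Y S)) ^ 2 :=
    pow_le_pow_left₀ hm0 hm1 2
  have a2 := mul_le_mul_of_nonneg_left a1 hKnn
  have a3 := mul_le_mul_of_nonneg_left hCSr hKnn
  have a4 := mul_le_mul_of_nonneg_left hTyp hu0
  have a5 := mul_le_mul_of_nonneg_left hTriθbound hu0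
  have hfinal : K * (δ ^ η * (N * (δ / 8))) ^ 2 ≤
      vol (shadeUnion 𝕊 Y) * (N * (N * (16 * Real.pi * δ ^ 2 / θ))) := by
    calc K * (δ ^ η * (N * (δ / 8))) ^ 2
        ≤ K * (∑ S ∈ 𝕊, vol (Y S)) ^ 2 := a2
      _ ≤ K * (vol (shadeUnion 𝕊 Y) * ∑ S₁ ∈ 𝕊, ∑ S₂ ∈ 𝕊, vol (Y S₁ ∩ Y S₂)) := a3
      _ = vol (shadeUnion 𝕊 Y) * (K * ∑ S₁ ∈ 𝕊, ∑ S₂ ∈ 𝕊, vol (Y S₁ ∩ Y S₂)) := heq1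
      _ ≤ vol (shadeUnion 𝕊 Y) * (∑ S₁ ∈ 𝕊, ∑ S₂ ∈ 𝕊,
            if θ/2 ≤ lineAngle (nrm S₁) (nrm S₂) ∧ lineAngle (nrm S₁) (nrm S₂) ≤ 2*θ
              then vol (Y S₁ ∩ Y S₂) else 0) := a4
      _ ≤ vol (shadeUnion 𝕊 Y) * (N * (N * (16 * Real.pi * δ ^ 2 / θ))) := a5
  have hδ2η : δ ^ (2*η) = (δ ^ η) ^ 2 := by
    rw [show (2:ℝ)*η = η*2 by ring, Real.rpow_mul hδ.le,
      show ((2:ℝ)) = ((2:ℕ):ℝ) by norm_num, Real.rpow_natCast]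
  have hmul := mul_le_mul_of_nonneg_right hfinal
    (by positivity : (0:ℝ) ≤ 64 * θ)
  have e1 : K * (δ ^ η * (N * (δ / 8))) ^ 2 * (64 * θ)
      = K * δ ^ (2*η) * θ * (N ^ 2 * δ ^ 2) := by
    rw [hδ2η]; ring
  have e2 : vol (shadeUnion 𝕊 Y) * (N * (N * (16 * Real.pi * δ ^ 2 / θ))) * (64 * θ)
      = 1024 * Real.pi * vol (shadeUnion 𝕊 Y) * (N ^ 2 * δ ^ 2) := by
    field_simp
    ring
  rw [e1, e2] at hmul
  have key : K * δ ^ (2*η) * θ ≤ 1024 * Real.pi * vol (shadeUnion 𝕊 Y) :=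
    le_of_mul_le_mul_right hmul (by positivity : (0:ℝ) < N ^ 2 * δ ^ 2)
  rw [show (1024 * Real.pi)⁻¹ * K * δ ^ (2*η) * θ
      = (K * δ ^ (2*η) * θ) * (1024 * Real.pi)⁻¹ by ring,
    ← div_eq_mul_inv, div_le_iff₀ (by positivity)]
  linarith [key]
end
end
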